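/- Let X be a locally convex space and f : X → ℝ∪{+∞} a proper convex lower semicontinuous function that is continuous on the (nonempty) interior of its domain. Then ∂f is maximal monotone. -/

import Mathlib

open scoped Topology

section Defs

variable {X : Type*} [AddCommGroup X] [Module ℝ X] [TopologicalSpace X]

/-- `p ∈ ∂f(x)`: `f x` is finite and `f y ≥ f x + ⟨y - x, p⟩` for all `y`. -/
def IsSubgrad (f : X → EReal) (x : X) (p : X →L[ℝ] ℝ) : Prop :=
  f x ≠ ⊤ ∧ f x ≠ ⊥ ∧ ∀ y, f x + (p (y - x) : EReal) ≤ f y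

/-- Graph of the convex subdifferential of `f`. -/
def graphSub (f : X → EReal) : Set (X × (X →L[ℝ] ℝ)) :=
  {q | IsSubgrad f q.1 q.2}

/-- Domain `D(∂f)` of the subdifferential. -/
def subdiffDom (f : X → EReal) : Set X := {x | ∃ p, IsSubgrad f x p}

/-- Range `R(∂f)` of the subdifferential. -/
def subdiffRan (f : X → EReal) : Set (X →L[ℝ] ℝ) := {p | ∃ x, IsSubgrad f x p}

/-- Monotone subset of `X × X*`. -/
def MonotoneSet (S : Set (X × (X →L[ℝ] ℝ))) : Prop :=
  ∀ a ∈ S, ∀ b ∈ S, 0 ≤ a.2 (a.1 - b.1) - b.2 (a.1 - b.1)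

/-- Maximal monotone subset of `X × X*` (maximal w.r.t. graph inclusion). -/
def MaxMonotoneSet (S : Set (X × (X →L[ℝ] ℝ))) : Prop :=
  MonotoneSet S ∧ ∀ T, MonotoneSet T → S ⊆ T → T = S

/-- Proper function: never `−∞` and not identically `+∞`. -/
def ProperE {Y : Type*} (f : Y → EReal) : Prop :=
  (∃ x, f x ≠ ⊤) ∧ ∀ x, f x ≠ ⊥

/-- Convexity of an extended-real-valued function via its epigraph. -/
def ConvexEpi (f : X → EReal) : Prop :=
  Convex ℝ {q : X × ℝ | f q.1 ≤ (q.2 : EReal)}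

/-- The lsc convex hull: the greatest lsc convex function majorized by `f`. -/
noncomputable def lscConvHull (f : X → EReal) : X → EReal := fun x =>
  sSup {v | ∃ g : X → EReal, ConvexEpi g ∧ LowerSemicontinuous g ∧ g ≤ f ∧ v = g x}

/-- Convex conjugate w.r.t. the dual system `(X, X*)`. -/
noncomputable def conjE (f : X → EReal) (p : X →L[ℝ] ℝ) : EReal :=
  ⨆ x, ((p x : EReal) - f x)

/-- Biconjugate `f**`. -/
noncomputable def biconjE (f : X → EReal) (x : X) : EReal :=
  ⨆ p : X →L[ℝ] ℝ, ((p x : EReal) - conjE f p)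

/-- Fitzpatrick function of `∂f`. -/
noncomputable def fitzSub (f : X → EReal) (x : X) (p : X →L[ℝ] ℝ) : EReal :=
  ⨆ a, ⨆ s, ⨆ _ : IsSubgrad f a s, ((s (x - a) + p a : ℝ) : EReal)

/-- Upper envelope `f^∪(x) = sup{⟨x−a, a*⟩ + f(a) : (a,a*) ∈ Graph ∂f}`. -/
noncomputable def upperEnv (f : X → EReal) (x : X) : EReal :=
  ⨆ a, ⨆ s, ⨆ _ : IsSubgrad f a s, ((s (x - a) : EReal) + f a)

end Defs

section Aux

open Filter Set Pointwise

variable {X : Type*} [AddCommGroup X] [Module ℝ X] [TopologicalSpace X]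
  [IsTopologicalAddGroup X] [ContinuousSMul ℝ X]

lemma auxSubgradRealIneq {f : X → EReal} {a y : X} {s : X →L[ℝ] ℝ}
    (h : IsSubgrad f a s) (hy : f y ≠ ⊤) :
    (f a).toReal + s (y - a) ≤ (f y).toReal := by
  have h3 := h.2.2 y
  have hsum_bot : f a + ((s (y - a) : ℝ) : EReal) ≠ ⊥ := by
    intro hbot
    rcases EReal.add_eq_bot_iff.mp hbot with h' | h'
    · exact h.2.1 h'
    · exact EReal.coe_ne_bot _ h' 
  have := EReal.toReal_le_toReal h3 hsum_bot hy
  rwa [EReal.toReal_add h.1 h.2.1 (EReal.coe_ne_top _) (EReal.coe_ne_bot _),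
    EReal.toReal_coe] at this

lemma auxSubgradOfReal {f : X → EReal} {a : X} {s : X →L[ℝ] ℝ}
    (hprop : ∀ z, f z ≠ ⊥) (ha : f a ≠ ⊤) (hb : f a ≠ ⊥)
    (h : ∀ y, f y ≠ ⊤ → (f a).toReal + s (y - a) ≤ (f y).toReal) :
    IsSubgrad f a s := by
  refine ⟨ha, hb, fun y => ?_⟩
  by_cases hy : f y = ⊤
  · rw [hy]; exact le_top
  · have hyb : f y ≠ ⊥ := hprop y
    have := h y hy
    calc f a + ((s (y - a) : ℝ) : EReal)
        = (((f a).toReal + s (y - a) : ℝ) : EReal) := by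
          rw [EReal.coe_add, EReal.coe_toReal ha hb]
      _ ≤ (((f y).toReal : ℝ) : EReal) := by exact_mod_cast this
      _ = f y := EReal.coe_toReal hy hyb

lemma auxMemClosureInterior {s : Set X} (hs : Convex ℝ s) {x y : X}
    (hx : x ∈ interior s) (hy : y ∈ s) : y ∈ closure (interior s) := by
  have hne : ((𝓝[Ioc (0:ℝ) 1] 0)).NeBot := by
    refine mem_closure_iff_nhdsWithin_neBot.mp ?_
    rw [closure_Ioc one_ne_zero.symm]
    exact ⟨le_refl 0, zero_le_one⟩
  have hcontf : Continuous (fun t : ℝ => t • x + (1 - t) • y) := by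
    continuity
  have htt : Tendsto (fun t : ℝ => t • x + (1 - t) • y) (𝓝[Ioc (0:ℝ) 1] 0) (𝓝 y) := by
    have h : Tendsto (fun t : ℝ => t • x + (1 - t) • y) (𝓝 0) (𝓝 ((0:ℝ) • x + ((1:ℝ) - 0) • y)) :=
      hcontf.tendsto 0
    norm_num at h
    exact h.mono_left nhdsWithin_le_nhds
  refine mem_closure_of_tendsto htt ?_
  filter_upwards [self_mem_nhdsWithin] with t ht
  exact hs.combo_interior_self_mem_interior hx hy ht.1 (by linarith [ht.2]) (by ring)

lemma auxLinearContinuous (L : X →ₗ[ℝ] ℝ) {W : Set X} (hW : W ∈ 𝓝 0) {K : ℝ}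
    (hK : ∀ v ∈ W, |L v| ≤ K) : Continuous L := by
  have hK0 : 0 ≤ K := by simpa using hK 0 (mem_of_mem_nhds hW)
  have h0 : Tendsto L (𝓝 0) (𝓝 0) := by
    rw [Metric.tendsto_nhds]
    intro ε hε
    have hc : (ε / (K + 1)) ≠ 0 := by positivity
    have hmem : (ε / (K + 1)) • W ∈ 𝓝 (0 : X) := by
      have := (smul_mem_nhds_smul_iff₀ (c := ε/(K+1)) (s := W) (x := (0:X)) hc).mpr hW
      simpa using this
    filter_upwards [hmem] with y hy
    obtain ⟨w, hw, rfl⟩ := hy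
    rw [Real.dist_eq, sub_zero, map_smul, smul_eq_mul, abs_mul,
      abs_of_pos (by positivity : (0:ℝ) < ε / (K+1))]
    calc ε/(K+1) * |L w| ≤ ε/(K+1) * K := by
          exact mul_le_mul_of_nonneg_left (hK w hw) (by positivity)
      _ < ε := by
          rw [div_mul_eq_mul_div, div_lt_iff₀ (by positivity)]
          nlinarith
  rw [continuous_iff_continuousAt]
  intro x
  have hL : Tendsto (fun h : X => L (x + h)) (𝓝 0) (𝓝 (L x)) := by
    simp only [map_add]
    simpa using tendsto_const_nhds.add h0
  rw [ContinuousAt, ← map_add_left_nhds_zero x, Filter.tendsto_map'_iff]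
  exact hL

lemma auxExistsSubgrad (f : X → EReal) (hproper : ProperE f) (hconv : ConvexEpi f)
    (hcont : ContinuousOn f (interior {x | f x ≠ ⊤})) {x : X}
    (hx : x ∈ interior {x | f x ≠ ⊤}) : ∃ s, IsSubgrad f x s := by
  have hfx_top : f x ≠ ⊤ := interior_subset hx
  have hfx_bot : f x ≠ ⊥ := hproper.2 x
  set r₀ : ℝ := (f x).toReal with hr₀
  have hfx : (r₀ : EReal) = f x := EReal.coe_toReal hfx_top hfx_bot
  set A : Set (X × ℝ) := {q : X × ℝ | f q.1 ≤ (q.2 : EReal)} with hA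
  have hca : ContinuousAt f x := hcont.continuousAt (isOpen_interior.mem_nhds hx)
  have hlt : f x < ((r₀ + 1 : ℝ) : EReal) := by
    rw [← hfx]; exact_mod_cast lt_add_one r₀
  have hN : {z | f z < ((r₀+1:ℝ):EReal)} ∈ 𝓝 x := hca (Iio_mem_nhds hlt)
  set W : Set X := interior {z | f z < ((r₀+1:ℝ):EReal)} with hWdef
  have hxW : x ∈ W := mem_interior_iff_mem_nhds.mpr hN
  have hWopen : IsOpen W := isOpen_interior
  -- the open box inside the epigraph
  have hUsub : W ×ˢ Ioi (r₀+1) ⊆ A := by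
    rintro ⟨z, r⟩ ⟨hz, hr⟩
    have h1 : z ∈ {w | f w < ((r₀+1:ℝ):EReal)} := interior_subset hz
    have h1' : f z < ((r₀+1:ℝ):EReal) := h1
    have h2 : ((r₀+1:ℝ):EReal) < (r : EReal) := EReal.coe_lt_coe_iff.mpr hr
    exact le_of_lt (lt_trans h1' h2)
  have hUopen : IsOpen (W ×ˢ Ioi (r₀+1)) := hWopen.prod isOpen_Ioi
  have hUint : W ×ˢ Ioi (r₀+1) ⊆ interior A := interior_maximal hUsub hUopen
  -- (x, r₀) is not in the interior of A
  have hz_notin : ((x, r₀) : X × ℝ) ∉ interior A := by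
    intro hmem
    have hAn : A ∈ 𝓝 ((x, r₀) : X × ℝ) := mem_interior_iff_mem_nhds.mp hmem
    have htt : Tendsto (fun t : ℝ => ((x, r₀ - t) : X × ℝ)) (𝓝[>] 0) (𝓝 (x, r₀)) := by
      have hcont2 : Continuous (fun t : ℝ => ((x, r₀ - t) : X × ℝ)) := by continuity
      have h : Tendsto (fun t : ℝ => ((x, r₀ - t) : X × ℝ)) (𝓝 0) (𝓝 (x, r₀ - 0)) :=
        hcont2.tendsto 0
      norm_num at h
      exact h.mono_left nhdsWithin_le_nhds
    have hev : ∀ᶠ t in 𝓝[>] (0:ℝ), ((x, r₀ - t) : X × ℝ) ∈ A := htt.eventually_mem hAn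
    obtain ⟨t, htA, htpos⟩ := (hev.and self_mem_nhdsWithin).exists
    have : f x ≤ ((r₀ - t : ℝ) : EReal) := htA
    rw [← hfx] at this
    have : r₀ ≤ r₀ - t := EReal.coe_le_coe_iff.mp this
    linarith [htpos]
  obtain ⟨Φ, hΦ⟩ := geometric_hahn_banach_open_point (hconv.interior) isOpen_interior hz_notin
  set μ : ℝ := Φ (0, 1) with hμdef
  set φ : X →L[ℝ] ℝ := Φ.comp (ContinuousLinearMap.inl ℝ X ℝ) with hφdef
  have hdec : ∀ (y : X) (r : ℝ), Φ (y, r) = φ y + r * μ := by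
    intro y r
    have : ((y, r) : X × ℝ) = (y, 0) + r • ((0:X), (1:ℝ)) := by
      simp [Prod.ext_iff]
    rw [this, map_add, map_smul, smul_eq_mul]
    rfl
  have hμneg : μ < 0 := by
    have h2 : Φ (x, r₀ + 2) < Φ (x, r₀) :=
      hΦ _ (hUint ⟨hxW, mem_Ioi.mpr (show r₀ + 1 < r₀ + 2 by linarith)⟩)
    rw [hdec, hdec] at h2
    nlinarith
  have hle : ∀ a ∈ A, Φ a ≤ Φ (x, r₀) := by
    intro a ha
    have hint : ((x, r₀+2) : X × ℝ) ∈ interior A := hUint ⟨hxW, mem_Ioi.mpr (show r₀ + 1 < r₀ + 2 by linarith)⟩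
    have hcl : a ∈ closure (interior A) := auxMemClosureInterior hconv hint ha
    have hclosed : closure (interior A) ⊆ {w : X × ℝ | Φ w ≤ Φ (x, r₀)} :=
      closure_minimal (fun w hw => (hΦ w hw).le) (isClosed_le Φ.continuous continuous_const)
    exact hclosed hcl
  refine ⟨(-μ)⁻¹ • φ, ?_⟩
  refine auxSubgradOfReal hproper.2 hfx_top hfx_bot (fun y hy => ?_)
  have hyb : f y ≠ ⊥ := hproper.2 y
  set ry : ℝ := (f y).toReal with hry
  have hyA : ((y, ry) : X × ℝ) ∈ A := le_of_eq (EReal.coe_toReal hy hyb).symm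
  have h5 := hle _ hyA
  rw [hdec, hdec] at h5
  -- h5 : φ y + ry * μ ≤ φ x + r₀ * μ
  have hsval : ((-μ)⁻¹ • φ) (y - x) = (-μ)⁻¹ * (φ y - φ x) := by
    simp [map_sub, mul_sub]
  rw [hsval]
  have hmpos : 0 < -μ := by linarith
  have hkey : (-μ)⁻¹ * (φ y - φ x) ≤ ry - r₀ := by
    have h6 : φ y - φ x ≤ (r₀ - ry) * μ := by nlinarith
    have h7 : (-μ)⁻¹ * (φ y - φ x) ≤ (-μ)⁻¹ * ((r₀ - ry) * μ) :=
      mul_le_mul_of_nonneg_left h6 (by positivity)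
    have h8 : (-μ)⁻¹ * ((r₀ - ry) * μ) = ry - r₀ := by
      field_simp
      rw [mul_div_cancel_left₀ _ hμneg.ne]
      ring
    linarith
  linarith

end Aux

section Key

open Filter Set Pointwise

variable {X : Type*} [AddCommGroup X] [Module ℝ X] [TopologicalSpace X]
  [IsTopologicalAddGroup X] [ContinuousSMul ℝ X]

set_option maxHeartbeats 1000000 in
lemma auxKey (f : X → EReal) (hproper : ProperE f) (hconv : ConvexEpi f)
    (hlsc : LowerSemicontinuous f)
    (hcont : ContinuousOn f (interior {x | f x ≠ ⊤}))
    (x₀ : X) (p₀ : X →L[ℝ] ℝ)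
    (hrel : ∀ a (s : X →L[ℝ] ℝ), IsSubgrad f a s → 0 ≤ (p₀ - s) (x₀ - a))
    {c : X} (hc : c ∈ interior {x | f x ≠ ⊤}) :
    f x₀ ≠ ⊤ ∧ (f x₀).toReal + p₀ (c - x₀) ≤ (f c).toReal := by
  classical
  set D := {x : X | f x ≠ ⊤} with hDdef
  have hDconv : Convex ℝ D := by
    have himg : D = Prod.fst '' {q : X × ℝ | f q.1 ≤ (q.2 : EReal)} := by
      ext z
      constructor
      · intro hz
        exact ⟨(z, (f z).toReal), le_of_eq (EReal.coe_toReal hz (hproper.2 z)).symm, rfl⟩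
      · rintro ⟨q, hq, rfl⟩
        intro htop
        have hq' : f q.1 ≤ (q.2 : EReal) := hq
        rw [htop] at hq'
        exact (EReal.coe_lt_top q.2).not_ge hq' 
    rw [himg]
    exact hconv.linear_image (LinearMap.fst ℝ X ℝ)
  set d : X := x₀ - c with hd
  set γ : ℝ → X := fun t => c + t • d with hγ
  have hγcont : Continuous γ := by
    simp only [hγ]
    exact continuous_const.add (continuous_id.smul continuous_const)
  have hγ0 : γ 0 = c := by simp [hγ]
  have hγ1 : γ 1 = x₀ := by simp [hγ, hd]
  set S : Set ℝ := {t : ℝ | t ∈ Set.Icc (0:ℝ) 1 ∧ f (γ t) ≠ ⊤} with hS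
  have hS0 : 0 ∈ S := ⟨⟨le_refl 0, zero_le_one⟩, by rw [hγ0]; exact interior_subset hc⟩
  have hSne : S.Nonempty := ⟨0, hS0⟩
  have hSbdd : BddAbove S := ⟨1, fun t ht => ht.1.2⟩
  set T : ℝ := sSup S with hT
  have hT0 : 0 ≤ T := le_csSup hSbdd hS0
  have hT1 : T ≤ 1 := csSup_le hSne (fun t ht => ht.1.2)
  have hintO : ∀ t, 0 ≤ t → t < T → γ t ∈ interior D := by
    intro t ht0 htlt
    obtain ⟨t₁, ht₁S, htlt₁⟩ := exists_lt_of_lt_csSup hSne htlt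
    have ht₁pos : 0 < t₁ := lt_of_le_of_lt ht0 htlt₁
    have hcombo : γ t = (1 - t/t₁) • c + (t/t₁) • (γ t₁) := by
      simp only [hγ]
      rw [smul_add, smul_smul, div_mul_cancel₀ t (ne_of_gt ht₁pos), ← add_assoc, ← add_smul]
      norm_num
    rw [hcombo]
    refine hDconv.combo_interior_self_mem_interior hc ht₁S.2 ?_
      (div_nonneg ht0 (le_of_lt ht₁pos)) (by ring)
    have h1 : t/t₁ < 1 := (div_lt_one ht₁pos).mpr htlt₁
    linarith
  have hTpos : 0 < T := by
    have hpre : γ ⁻¹' (interior D) ∈ 𝓝 (0:ℝ) := by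
      apply hγcont.continuousAt.preimage_mem_nhds
      rw [hγ0]
      exact isOpen_interior.mem_nhds hc
    obtain ⟨δ, hδpos, hball⟩ := Metric.mem_nhds_iff.mp hpre
    have hτpos : 0 < min (δ/2) 1 := lt_min (by linarith) one_pos
    have hτmem : γ (min (δ/2) 1) ∈ interior D := by
      apply hball
      rw [Metric.mem_ball, Real.dist_eq, sub_zero, abs_of_pos hτpos]
      calc min (δ/2) 1 ≤ δ/2 := min_le_left _ _
        _ < δ := by linarith
    have hτS : min (δ/2) 1 ∈ S := ⟨⟨le_of_lt hτpos, min_le_right _ _⟩, interior_subset hτmem⟩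
    exact lt_of_lt_of_le hτpos (le_csSup hSbdd hτS)
  have hTclo : T ∈ closure (Set.Ico (0:ℝ) T) := by
    rw [closure_Ico (ne_of_lt hTpos)]
    exact ⟨hT0, le_refl T⟩
  haveI hΛ : (𝓝[Set.Ico (0:ℝ) T] T).NeBot := mem_closure_iff_nhdsWithin_neBot.mp hTclo
  have hγtend : Tendsto γ (𝓝[Set.Ico (0:ℝ) T] T) (𝓝 (γ T)) :=
    (hγcont.tendsto T).mono_left nhdsWithin_le_nhds
  have hsub_int : ∀ t ∈ Set.Ico (0:ℝ) T, ∃ s, IsSubgrad f (γ t) s := fun t ht =>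
    auxExistsSubgrad f hproper hconv hcont (hintO t ht.1 ht.2)
  choose! SS hSS using hsub_int
  have hfin : ∀ t ∈ Set.Ico (0:ℝ) T, f (γ t) ≠ ⊤ := fun t ht =>
    interior_subset (hintO t ht.1 ht.2)
  have hrel2 : ∀ t ∈ Set.Ico (0:ℝ) T, (SS t) d ≤ p₀ d := by
    intro t ht
    have h := hrel _ _ (hSS t ht)
    have hxγ : x₀ - γ t = (1 - t) • d := by
      simp only [hγ]
      rw [sub_smul, one_smul, hd]
      abel
    rw [hxγ, map_smul, smul_eq_mul] at h
    have h1t : 0 < 1 - t := by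
      have h2 := ht.2
      linarith
    have hv : 0 ≤ (p₀ - SS t) d := by
      by_contra hneg
      push_neg at hneg
      have h7 := mul_pos h1t (neg_pos.mpr hneg)
      have e : (1 - t) * (-((p₀ - SS t) d)) = -((1 - t) * ((p₀ - SS t) d)) := by ring
      linarith
    rw [ContinuousLinearMap.sub_apply, sub_nonneg] at hv
    exact hv
  set φ : ℝ → ℝ := fun t => (f (γ t)).toReal - t * p₀ d with hφ
  have hφmono : ∀ t' t, t' ∈ Set.Ico (0:ℝ) T → t ∈ Set.Ico (0:ℝ) T → t' ≤ t → φ t ≤ φ t' := by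
    intro t' t ht' ht htle
    have hineq := auxSubgradRealIneq (hSS t ht) (hfin t' ht')
    have hγdiff : γ t' - γ t = (t' - t) • d := by
      simp only [hγ]
      rw [sub_smul]
      abel
    rw [hγdiff, map_smul, smul_eq_mul] at hineq
    have hm : (t - t') * SS t d ≤ (t - t') * p₀ d :=
      mul_le_mul_of_nonneg_left (hrel2 t ht) (by linarith)
    simp only [hφ]
    have e1 : (t' - t) * SS t d = -((t - t') * SS t d) := by ring
    have e2 : (t - t') * p₀ d = t * p₀ d - t' * p₀ d := by ring
    linarith [hineq, hm]
  have hIcoMem : Set.Ico (0:ℝ) T ∈ 𝓝[Set.Ico (0:ℝ) T] T := self_mem_nhdsWithin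
  have habs1 : ∀ t, 0 ≤ t → t ≤ 1 → t * p₀ d ≤ |p₀ d| := by
    intro t h0 h1
    calc t * p₀ d ≤ |t * p₀ d| := le_abs_self _
      _ = t * |p₀ d| := by rw [abs_mul, abs_of_nonneg h0]
      _ ≤ 1 * |p₀ d| := mul_le_mul_of_nonneg_right h1 (abs_nonneg _)
      _ = |p₀ d| := one_mul _
  have habs2 : ∀ t, 0 ≤ t → t ≤ 1 → -|p₀ d| ≤ t * p₀ d := by
    intro t h0 h1
    have := habs1 t h0 h1
    rcases le_or_gt 0 (p₀ d) with h | h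
    · linarith [abs_nonneg (p₀ d), mul_nonneg h0 h]
    · rw [abs_of_neg h]
      linarith [mul_le_mul_of_nonpos_right h1 (le_of_lt h)]
  have hbddAbove : ∀ t ∈ Set.Ico (0:ℝ) T, (f (γ t)).toReal ≤ (f c).toReal + |p₀ d| := by
    intro t ht
    have h1 : φ t ≤ φ 0 := hφmono 0 t ⟨le_refl 0, hTpos⟩ ht ht.1
    simp only [hφ, hγ0, zero_mul, sub_zero] at h1
    have h2 : t * p₀ d ≤ |p₀ d| := habs1 t ht.1 (by linarith [ht.2])
    linarith
  have hxbar_top : f (γ T) ≠ ⊤ := by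
    intro htop
    have hev : ∀ᶠ t in 𝓝[Set.Ico (0:ℝ) T] T, (((f c).toReal + |p₀ d| : ℝ) : EReal) < f (γ t) :=
      hγtend.eventually (hlsc (γ T) _ (by show _ < f (γ T); rw [htop]; exact EReal.coe_lt_top _))
    obtain ⟨t, hlt2, htIco⟩ := (hev.and hIcoMem).exists
    have hle2 : f (γ t) ≤ (((f c).toReal + |p₀ d| : ℝ) : EReal) := by
      rw [← EReal.coe_toReal (hfin t htIco) (hproper.2 (γ t))]
      exact_mod_cast hbddAbove t htIco
    exact absurd hle2 (not_le.mpr hlt2)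
  set m : ℝ := (f (γ T)).toReal with hm
  have hmcoe : (m : EReal) = f (γ T) := EReal.coe_toReal hxbar_top (hproper.2 _)
  have hφlb : ∀ t ∈ Set.Ico (0:ℝ) T, m - T * p₀ d ≤ φ t := by
    intro t ht
    by_contra hlt2
    push_neg at hlt2
    have hεpos : 0 < ((m - T * p₀ d) - φ t)/2 := div_pos (sub_pos.mpr hlt2) two_pos
    set ε : ℝ := ((m - T * p₀ d) - φ t)/2 with hε
    have hev1 : ∀ᶠ u in 𝓝[Set.Ico (0:ℝ) T] T, ((m - ε : ℝ) : EReal) < f (γ u) :=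
      hγtend.eventually (hlsc (γ T) _
        (by show _ < f (γ T); rw [← hmcoe]; exact_mod_cast (by linarith : m - ε < m)))
    have hev2 : ∀ᶠ u in 𝓝[Set.Ico (0:ℝ) T] T, t ≤ u :=
      (eventually_ge_nhds ht.2).filter_mono nhdsWithin_le_nhds
    have htend3 : Tendsto (fun u : ℝ => (u - T) * p₀ d) (𝓝[Set.Ico (0:ℝ) T] T) (𝓝 0) := by
      have hcont3 : Continuous (fun u : ℝ => (u - T) * p₀ d) :=
        (continuous_id.sub continuous_const).mul continuous_const
      have h : Tendsto (fun u : ℝ => (u - T) * p₀ d) (𝓝 T) (𝓝 ((T - T) * p₀ d)) :=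
        hcont3.tendsto T
      norm_num at h
      exact h.mono_left nhdsWithin_le_nhds
    have hev3 : ∀ᶠ u in 𝓝[Set.Ico (0:ℝ) T] T, |(u - T) * p₀ d| < ε := by
      have h := Metric.tendsto_nhds.mp htend3 ε hεpos
      filter_upwards [h] with u hu
      rwa [Real.dist_eq, sub_zero] at hu
    obtain ⟨u, ⟨⟨h1, h2⟩, h3⟩, h4⟩ := (((hev1.and hev2).and hev3).and hIcoMem).exists
    have h5 : φ u ≤ φ t := hφmono t u ht h4 h2
    have h6 : m - ε ≤ (f (γ u)).toReal := by
      have h7 := EReal.toReal_le_toReal (le_of_lt h1) (EReal.coe_ne_bot _) (hfin u h4)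
      rwa [EReal.toReal_coe] at h7
    have habs := abs_lt.mp h3
    have hexp : (u - T) * p₀ d = u * p₀ d - T * p₀ d := by ring
    simp only [hφ] at h5 hlt2
    linarith [habs.1, habs.2]
  by_cases hcase : T < 1
  · exfalso
    have hnotin : γ T ∉ interior D := by
      intro hmem
      have hpre : γ ⁻¹' (interior D) ∈ 𝓝 T :=
        hγcont.continuousAt.preimage_mem_nhds (isOpen_interior.mem_nhds hmem)
      obtain ⟨δ, hδpos, hball⟩ := Metric.mem_nhds_iff.mp hpre
      set t₂ : ℝ := min (T + δ/2) ((T+1)/2) with ht₂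
      have h1 : T < t₂ := lt_min (by linarith) (by linarith)
      have h2 : t₂ ≤ 1 := le_trans (min_le_right _ _) (by linarith)
      have h3 : γ t₂ ∈ interior D := by
        apply hball
        rw [Metric.mem_ball, Real.dist_eq, abs_of_pos (by linarith : (0:ℝ) < t₂ - T)]
        have h4 : t₂ ≤ T + δ/2 := min_le_left _ _
        linarith
      have h4 : t₂ ∈ S := ⟨⟨by linarith, h2⟩, interior_subset h3⟩
      exact absurd (le_csSup hSbdd h4) (not_le.mpr h1)
    have hlow : ∀ t ∈ Set.Ico (0:ℝ) T, (m - T * p₀ d) - |p₀ d| ≤ (f (γ t)).toReal := by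
      intro t ht
      have h1 := hφlb t ht
      simp only [hφ] at h1
      have h2 := habs2 t ht.1 (by linarith [ht.2])
      linarith
    have hcafc : ContinuousAt f c := hcont.continuousAt (isOpen_interior.mem_nhds hc)
    have hfc_top : f c ≠ ⊤ := interior_subset hc
    have hfc_bot : f c ≠ ⊥ := hproper.2 c
    set r₁ : ℝ := (f c).toReal + 1 with hr₁
    have hflt : f c < (r₁ : EReal) := by
      rw [← EReal.coe_toReal hfc_top hfc_bot]
      exact_mod_cast (lt_add_one _)
    have hN : {z | f z < (r₁ : EReal)} ∈ 𝓝 c := hcafc (Iio_mem_nhds hflt)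
    set W0 : Set X := (fun v : X => c + v) ⁻¹' {z | f z < (r₁ : EReal)} with hW0
    have hW0mem : W0 ∈ 𝓝 (0:X) := by
      apply ContinuousAt.preimage_mem_nhds
        ((continuous_const.add continuous_id : Continuous (fun v : X => c + v)).continuousAt)
      simpa using hN
    set W : Set X := W0 ∩ (fun v : X => -v) ⁻¹' W0 with hW
    have hWmem : W ∈ 𝓝 (0:X) := by
      apply Filter.inter_mem hW0mem
      apply ContinuousAt.preimage_mem_nhds continuous_neg.continuousAt
      simpa using hW0mem
    have hWf : ∀ v ∈ W, f (c + v) < (r₁ : EReal) ∧ f (c + -v) < (r₁ : EReal) :=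
      fun v hv => ⟨hv.1, hv.2⟩
    set K : ℝ := r₁ - ((m - T * p₀ d) - |p₀ d|) + |p₀ d| with hK
    have hbound : ∀ t ∈ Set.Ico (0:ℝ) T, ∀ v ∈ W, |SS t v| ≤ K := by
      intro t ht v hv
      have key : ∀ w : X, f (c + w) < (r₁:EReal) → SS t w ≤ K := by
        intro w hfw
        have hineq := auxSubgradRealIneq (hSS t ht) (ne_top_of_lt hfw)
        have hdiff : (c + w) - γ t = w - t • d := by
          simp only [hγ]
          abel
        rw [hdiff, map_sub, map_smul, smul_eq_mul] at hineq
        have hup : (f (c+w)).toReal ≤ r₁ := by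
          have h7 := EReal.toReal_le_toReal (le_of_lt hfw) (hproper.2 _) (EReal.coe_ne_top _)
          simpa using h7
        have hlow2 := hlow t ht
        have h8 : t * SS t d ≤ |p₀ d| :=
          le_trans (mul_le_mul_of_nonneg_left (hrel2 t ht) ht.1)
            (habs1 t ht.1 (by linarith [ht.2]))
        linarith
      have h9 := key v (hWf v hv).1
      have h10 := key (-v) (hWf v hv).2
      rw [map_neg] at h10
      rw [abs_le]
      exact ⟨by linarith, h9⟩
    set U : Ultrafilter ℝ := Ultrafilter.of (𝓝[Set.Ico (0:ℝ) T] T) with hUdef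
    have hUle : (U : Filter ℝ) ≤ 𝓝[Set.Ico (0:ℝ) T] T := Ultrafilter.of_le _
    have hUIco : Set.Ico (0:ℝ) T ∈ (U : Filter ℝ) := hUle hIcoMem
    have hlimex : ∀ y : X, ∃ a : ℝ, Tendsto (fun t => SS t y) (U : Filter ℝ) (𝓝 a) := by
      intro y
      have hprey : (fun r : ℝ => r • y) ⁻¹' W ∈ 𝓝 (0:ℝ) := by
        apply ContinuousAt.preimage_mem_nhds (continuous_id.smul continuous_const).continuousAt
        simpa using hWmem
      obtain ⟨δ, hδpos, hball⟩ := Metric.mem_nhds_iff.mp hprey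
      have hmemW : (δ/2) • y ∈ W := by
        apply hball
        rw [Metric.mem_ball, Real.dist_eq, sub_zero, abs_of_pos (by linarith)]
        linarith
      have hbd : ∀ t ∈ Set.Ico (0:ℝ) T, SS t y ∈ Set.Icc (-(|2/δ| * K)) (|2/δ| * K) := by
        intro t ht
        have h2 := hbound t ht _ hmemW
        have h3 : SS t y = (2/δ) * SS t ((δ/2) • y) := by
          rw [map_smul, smul_eq_mul]
          field_simp
        have h4 : |SS t y| ≤ |2/δ| * K := by
          rw [h3, abs_mul]
          exact mul_le_mul_of_nonneg_left h2 (abs_nonneg _)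
        exact Set.mem_Icc.mpr (abs_le.mp h4)
      have hmem2 : {t : ℝ | SS t y ∈ Set.Icc (-(|2/δ| * K)) (|2/δ| * K)} ∈ (U : Filter ℝ) :=
        Filter.mem_of_superset hUIco hbd
      have hprin : (U.map (fun t => SS t y) : Filter ℝ) ≤
          Filter.principal (Set.Icc (-(|2/δ| * K)) (|2/δ| * K)) := by
        rw [Filter.le_principal_iff]
        exact hmem2
      obtain ⟨a, _, ha⟩ := isCompact_Icc.ultrafilter_le_nhds (U.map (fun t => SS t y)) hprin
      exact ⟨a, ha⟩
    choose L hL using hlimex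
    have hLadd : ∀ y z, L (y + z) = L y + L z := by
      intro y z
      refine tendsto_nhds_unique (hL (y+z)) ?_
      have h := (hL y).add (hL z)
      simpa [map_add] using h
    have hLsmul : ∀ (r : ℝ) (y : X), L (r • y) = r * L y := by
      intro r y
      refine tendsto_nhds_unique (hL (r • y)) ?_
      have h := (hL y).const_mul r
      simpa [map_smul, smul_eq_mul] using h
    set Lm : X →ₗ[ℝ] ℝ := IsLinearMap.mk' L ⟨hLadd, fun r y => by
      rw [hLsmul]; rfl⟩ with hLm
    have hLmval : ∀ y, Lm y = L y := fun y => rfl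
    have hLcont : Continuous Lm := by
      apply auxLinearContinuous Lm hWmem (K := K)
      intro v hv
      have htd : Tendsto (fun t => |SS t v|) (U : Filter ℝ) (𝓝 |L v|) := (hL v).abs
      exact le_of_tendsto htd (Filter.mem_of_superset hUIco (fun t ht => hbound t ht v hv))
    set sstar : X →L[ℝ] ℝ := ⟨Lm, hLcont⟩ with hsstardef
    have hsval : ∀ y, sstar y = L y := fun y => rfl
    have hid : Tendsto (fun t : ℝ => t) (U : Filter ℝ) (𝓝 T) :=
      tendsto_id'.mpr (hUle.trans nhdsWithin_le_nhds)
    have hsub_star : IsSubgrad f (γ T) sstar := by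
      refine auxSubgradOfReal hproper.2 hxbar_top (hproper.2 _) (fun y hy => ?_)
      have hev : ∀ᶠ t in (U : Filter ℝ),
          ((m - T * p₀ d) + t * p₀ d) + (SS t y - SS t c - t * SS t d) ≤ (f y).toReal := by
        refine Filter.mem_of_superset hUIco (fun t ht => ?_)
        have hineq := auxSubgradRealIneq (hSS t ht) hy
        have hdiff : y - γ t = y - c - t • d := by
          simp only [hγ]
          abel
        rw [hdiff, map_sub, map_sub, map_smul, smul_eq_mul] at hineq
        have hlb : (m - T * p₀ d) + t * p₀ d ≤ (f (γ t)).toReal := by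
          have h1 := hφlb t ht
          simp only [hφ] at h1
          linarith
        simp only [Set.mem_setOf_eq]
        linarith
      have htlim : Tendsto
          (fun t : ℝ => ((m - T * p₀ d) + t * p₀ d) + (SS t y - SS t c - t * SS t d))
          (U : Filter ℝ) (𝓝 (((m - T * p₀ d) + T * p₀ d) + (L y - L c - T * L d))) := by
        exact (tendsto_const_nhds.add (hid.mul_const _)).add
          (((hL y).sub (hL c)).sub (hid.mul (hL d)))
      have hfinal := le_of_tendsto htlim hev
      have hyx : y - γ T = y - c - T • d := by
        simp only [hγ]
        abel
      have hsv : sstar (y - γ T) = L y - L c - T * L d := by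
        rw [hyx, hsval]
        rw [show y - c - T • d = (y - c) - T • d from rfl]
        rw [show L (y - c - T • d) = Lm (y - c - T • d) from rfl]
        rw [map_sub, map_sub, map_smul, smul_eq_mul]
        simp [hLmval]
      rw [hsv]
      linarith
    obtain ⟨ρ, hρ⟩ := geometric_hahn_banach_open_point hDconv.interior isOpen_interior hnotin
    have hρD : ∀ y ∈ D, ρ y ≤ ρ (γ T) := by
      intro y hyD
      have hcl : y ∈ closure (interior D) := auxMemClosureInterior hDconv hc hyD
      exact closure_minimal (fun w hw => (hρ w hw).le)
        (isClosed_le ρ.continuous continuous_const) hcl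
    have hργ : ρ (γ T) = ρ c + T * ρ d := by
      simp only [hγ]
      rw [map_add, map_smul, smul_eq_mul]
    have hρd : 0 < ρ d := by
      have h1 : ρ c < ρ (γ T) := hρ c hc
      rw [hργ] at h1
      by_contra hle3
      push_neg at hle3
      have h6 : T * ρ d ≤ 0 := mul_nonpos_of_nonneg_of_nonpos (le_of_lt hTpos) hle3
      linarith
    have hBpos : 0 < (1 - T) * ρ d := mul_pos (by linarith) hρd
    set B : ℝ := (1 - T) * ρ d with hB
    set A₀ : ℝ := (p₀ - sstar) (x₀ - γ T) with hA₀
    set lam : ℝ := max 0 ((A₀ + 1)/B) with hlam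
    have hlam0 : 0 ≤ lam := le_max_left _ _
    have hgraph : IsSubgrad f (γ T) (sstar + lam • ρ) := by
      refine ⟨hxbar_top, hproper.2 _, fun y => ?_⟩
      by_cases hy : f y = ⊤
      · rw [hy]; exact le_top
      · have h1 := hsub_star.2.2 y
        have h2 : (sstar + lam • ρ) (y - γ T) ≤ sstar (y - γ T) := by
          have h3 : ρ (y - γ T) ≤ 0 := by
            rw [map_sub, sub_nonpos]
            exact hρD y hy
          have h4 : (sstar + lam • ρ) (y - γ T) = sstar (y - γ T) + lam * ρ (y - γ T) := by
            rw [ContinuousLinearMap.add_apply, ContinuousLinearMap.smul_apply, smul_eq_mul]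
          rw [h4]
          linarith [mul_nonpos_of_nonneg_of_nonpos hlam0 h3]
        calc f (γ T) + (((sstar + lam • ρ) (y - γ T) : ℝ) : EReal)
            ≤ f (γ T) + ((sstar (y - γ T) : ℝ) : EReal) := by
              apply add_le_add (le_refl _)
              exact_mod_cast h2
          _ ≤ f y := h1
    have hrel3 := hrel _ _ hgraph
    have hx₀γ : x₀ - γ T = (1 - T) • d := by
      simp only [hγ]
      rw [sub_smul, one_smul, hd]
      abel
    have hρx : ρ (x₀ - γ T) = B := by
      rw [hx₀γ, map_smul, smul_eq_mul, hB]
    have hexp2 : (p₀ - (sstar + lam • ρ)) (x₀ - γ T) = A₀ - lam * B := by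
      rw [hA₀, ← hρx]
      simp only [ContinuousLinearMap.sub_apply, ContinuousLinearMap.add_apply,
        ContinuousLinearMap.smul_apply, smul_eq_mul]
      ring
    have hlamB : A₀ + 1 ≤ lam * B := by
      have h5 := mul_le_mul_of_nonneg_right (le_max_right 0 ((A₀+1)/B)) (le_of_lt hBpos)
      rwa [div_mul_cancel₀ _ (ne_of_gt hBpos)] at h5
    rw [hexp2] at hrel3
    linarith
  · have hT1' : T = 1 := le_antisymm hT1 (not_lt.mp hcase)
    rw [hT1', hγ1] at hxbar_top hmcoe hm
    rw [hT1'] at hφlb hTpos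
    have h0Ico : (0:ℝ) ∈ Set.Ico (0:ℝ) 1 := ⟨le_refl 0, hTpos⟩
    have h1 := hφlb 0 h0Ico
    simp only [hφ, hγ0, zero_mul, sub_zero, one_mul] at h1
    have hcx : c - x₀ = -d := by rw [hd]; abel
    refine ⟨hxbar_top, ?_⟩
    rw [hcx, map_neg, ← hm]
    linarith

end Key

section DomConvex

open Filter Set

variable {X : Type*} [AddCommGroup X] [Module ℝ X] [TopologicalSpace X]

lemma auxDomConvex (f : X → EReal) (hproper : ProperE f) (hconv : ConvexEpi f) :
    Convex ℝ {x : X | f x ≠ ⊤} := by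
  have himg : {x : X | f x ≠ ⊤} = Prod.fst '' {q : X × ℝ | f q.1 ≤ (q.2 : EReal)} := by
    ext z
    constructor
    · intro hz
      exact ⟨(z, (f z).toReal), le_of_eq (EReal.coe_toReal hz (hproper.2 z)).symm, rfl⟩
    · rintro ⟨q, hq, rfl⟩
      intro htop
      have hq' : f q.1 ≤ (q.2 : EReal) := hq
      rw [htop] at hq'
      exact (EReal.coe_lt_top q.2).not_ge hq'
  rw [himg]
  exact hconv.linear_image (LinearMap.fst ℝ X ℝ)


end DomConvex

section MainProof

open Filter Set

set_option maxHeartbeats 1000000 in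
theorem subdiff_maxMonotone_of_continuous_on_interior {X : Type*} [AddCommGroup X] [Module ℝ X] [TopologicalSpace X]
    [IsTopologicalAddGroup X] [ContinuousSMul ℝ X] [LocallyConvexSpace ℝ X] [T2Space X]
    (f : X → EReal) (hproper : ProperE f) (hconv : ConvexEpi f)
    (hlsc : LowerSemicontinuous f)
    (hint : (interior {x | f x ≠ ⊤}).Nonempty)
    (hcont : ContinuousOn f (interior {x | f x ≠ ⊤})) :
    MaxMonotoneSet (graphSub f) := by
  classical
  have hmono : MonotoneSet (graphSub f) := by
    rintro ⟨a, s⟩ ha ⟨b, t⟩ hb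
    have has : IsSubgrad f a s := ha
    have hbt : IsSubgrad f b t := hb
    have h1 := auxSubgradRealIneq has hbt.1
    have h2 := auxSubgradRealIneq hbt has.1
    show 0 ≤ s (a - b) - t (a - b)
    have e1 : s (a - b) = -(s (b - a)) := by
      rw [show a - b = -(b - a) by abel, map_neg]
    linarith [h1, h2]
  refine ⟨hmono, fun T hT hsub => ?_⟩
  refine Set.Subset.antisymm ?_ hsub
  rintro ⟨x₀, p₀⟩ hxT
  show IsSubgrad f x₀ p₀
  have hrel : ∀ a (s : X →L[ℝ] ℝ), IsSubgrad f a s → 0 ≤ (p₀ - s) (x₀ - a) := by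
    intro a s hs
    have h := hT (x₀, p₀) hxT (a, s) (hsub hs)
    simpa [ContinuousLinearMap.sub_apply] using h
  obtain ⟨c, hc⟩ := hint
  obtain ⟨hx₀top, _⟩ := auxKey f hproper hconv hlsc hcont x₀ p₀ hrel hc
  have hx₀bot : f x₀ ≠ ⊥ := hproper.2 x₀
  refine auxSubgradOfReal hproper.2 hx₀top hx₀bot (fun y hy => ?_)
  have hDconv : Convex ℝ {x : X | f x ≠ ⊤} := auxDomConvex f hproper hconv
  have hDpt : ∀ u : ℝ, 0 ≤ u → u < 1 → c + u • (y - c) ∈ interior {x : X | f x ≠ ⊤} := by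
    intro u h0 h1
    have hcombo : c + u • (y - c) = (1-u) • c + u • y := by
      rw [sub_smul, one_smul, smul_sub]
      abel
    rw [hcombo]
    exact hDconv.combo_interior_self_mem_interior hc hy (by linarith) h0 (by ring)
  have happ : ∀ u : ℝ, 0 ≤ u → u < 1 →
      (f x₀).toReal + p₀ ((c + u • (y - c)) - x₀) ≤ (f (c + u • (y - c))).toReal :=
    fun u h0 h1 => (auxKey f hproper hconv hlsc hcont x₀ p₀ hrel (hDpt u h0 h1)).2
  have hcA : (c, (f c).toReal) ∈ {q : X × ℝ | f q.1 ≤ (q.2 : EReal)} :=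
    le_of_eq (EReal.coe_toReal (interior_subset hc) (hproper.2 c)).symm
  have hyA : (y, (f y).toReal) ∈ {q : X × ℝ | f q.1 ≤ (q.2 : EReal)} :=
    le_of_eq (EReal.coe_toReal hy (hproper.2 y)).symm
  have hcvx : ∀ u : ℝ, 0 ≤ u → u ≤ 1 →
      (f (c + u • (y - c))).toReal ≤ (1-u) * (f c).toReal + u * (f y).toReal := by
    intro u h0 h1
    have hmem := hconv hcA hyA (by linarith : (0:ℝ) ≤ 1 - u) h0 (by ring)
    have hmem' : f ((1-u) • c + u • y) ≤
        (((1-u) * (f c).toReal + u * (f y).toReal : ℝ) : EReal) := by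
      have heq : (1-u) • ((c, (f c).toReal) : X × ℝ) + u • ((y, (f y).toReal) : X × ℝ)
          = ((1-u) • c + u • y, (1-u) * (f c).toReal + u * (f y).toReal) := by
        simp [Prod.ext_iff, smul_eq_mul]
      rw [heq] at hmem
      exact hmem
    have hcombo : c + u • (y - c) = (1-u) • c + u • y := by
      rw [sub_smul, one_smul, smul_sub]
      abel
    rw [hcombo]
    have hbot2 : f ((1-u) • c + u • y) ≠ ⊥ := hproper.2 _
    have := EReal.toReal_le_toReal hmem' hbot2 (EReal.coe_ne_top _)
    rwa [EReal.toReal_coe] at this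
  have hlin : ∀ u : ℝ, p₀ ((c + u • (y - c)) - x₀) = p₀ (c - x₀) + u * p₀ (y - c) := by
    intro u
    rw [show (c + u • (y - c)) - x₀ = (c - x₀) + u • (y - c) by abel, map_add, map_smul,
      smul_eq_mul]
  haveI hne01 : (𝓝[Set.Ico (0:ℝ) 1] (1:ℝ)).NeBot := by
    refine mem_closure_iff_nhdsWithin_neBot.mp ?_
    rw [closure_Ico (zero_ne_one)]
    exact ⟨zero_le_one, le_refl 1⟩
  have hev : ∀ᶠ u in 𝓝[Set.Ico (0:ℝ) 1] (1:ℝ),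
      0 ≤ ((1-u) * (f c).toReal + u * (f y).toReal)
        - ((f x₀).toReal + (p₀ (c - x₀) + u * p₀ (y - c))) := by
    filter_upwards [self_mem_nhdsWithin] with u hu
    have h1 := happ u hu.1 hu.2
    have h2 := hcvx u hu.1 (le_of_lt hu.2)
    rw [hlin u] at h1
    linarith
  have htt : Tendsto (fun u : ℝ => ((1-u) * (f c).toReal + u * (f y).toReal)
      - ((f x₀).toReal + (p₀ (c - x₀) + u * p₀ (y - c)))) (𝓝[Set.Ico (0:ℝ) 1] (1:ℝ))
      (𝓝 ((((1:ℝ)-1) * (f c).toReal + 1 * (f y).toReal)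
        - ((f x₀).toReal + (p₀ (c - x₀) + 1 * p₀ (y - c))))) := by
    have hcont4 : Continuous (fun u : ℝ => ((1-u) * (f c).toReal + u * (f y).toReal)
        - ((f x₀).toReal + (p₀ (c - x₀) + u * p₀ (y - c)))) := by
      exact (((continuous_const.sub continuous_id).mul continuous_const).add
        (continuous_id.mul continuous_const)).sub
        (continuous_const.add (continuous_const.add (continuous_id.mul continuous_const)))
    exact (hcont4.tendsto 1).mono_left nhdsWithin_le_nhds
  have hfinal := ge_of_tendsto htt hev
  have hsplit : p₀ (y - x₀) = p₀ (c - x₀) + p₀ (y - c) := by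
    rw [← map_add, show (c - x₀) + (y - c) = y - x₀ by abel]
  rw [hsplit]
  have hval : (((1:ℝ)-1) * (f c).toReal + 1 * (f y).toReal)
      - ((f x₀).toReal + (p₀ (c - x₀) + 1 * p₀ (y - c)))
      = (f y).toReal - ((f x₀).toReal + (p₀ (c - x₀) + p₀ (y - c))) := by ring
  rw [hval] at hfinal
  linarith

end MainProof
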